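/- Let α be a silhouette curve on a surface M in Galilean 3-space (⟨n,d⟩=0 along α) whose axis d is a unit isotropic vector parallel to Q, i.e. d=±Q. Then τ_g=0 and k_g=0 along α, and consequently τ=0, so α is a plane curve. -/
import Mathlib


/-- The scalar product of (projections of) vectors onto the `yz`-plane; it
agrees with the Galilean scalar product on isotropic vectors. -/
def iprod (x y : ℝ × ℝ × ℝ) : ℝ := x.2.1 * y.2.1 + x.2.2 * y.2.2

/-- If `α` is a silhouette curve (`⟨n,d⟩ = 0`) on a surface in Galilean
3-space whose fixed unit isotropic axis `d` is parallel to `Q` (`d = ±Q`),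
then `τ_g = 0`, `k_g = 0`, and consequently `τ = 0`: `α` is a plane curve. -/
theorem silhouette_axis_parallel_Q_plane_curve
    (τ kg kn τg : ℝ → ℝ) (T Q n : ℝ → ℝ × ℝ × ℝ) (d : ℝ × ℝ × ℝ)
    (hTdiff : Differentiable ℝ T) (hQdiff : Differentiable ℝ Q)
    (hndiff : Differentiable ℝ n)
    (hDarboux : ∀ s, deriv T s = kg s • Q s + kn s • n s ∧ deriv Q s = τg s • n s
        ∧ deriv n s = (-(τg s)) • Q s)
    (hQunit : ∀ s, iprod (Q s) (Q s) = 1)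
    (hnunit : ∀ s, iprod (n s) (n s) = 1)
    (hd : (∀ s, d = Q s) ∨ (∀ s, d = -(Q s)))
    (hsil : ∀ s, iprod (n s) d = 0)
    (hTd : ∀ s, iprod (T s) d = 0)
    (hτ : ∀ s, τ s = -(τg s) + (deriv kg s * kn s - kg s * deriv kn s)
        / ((kg s) ^ 2 + (kn s) ^ 2)) :
    ∀ s, τg s = 0 ∧ kg s = 0 ∧ τ s = 0 := by
  -- Q is constant
  have hQconst : ∃ c, ∀ s, Q s = c := by
    rcases hd with h | h
    · exact ⟨d, fun s => (h s).symm⟩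
    · exact ⟨-d, fun s => by rw [h s, neg_neg]⟩
  obtain ⟨c, hQc⟩ := hQconst
  have hQfun : Q = fun _ => c := funext hQc
  have hderivQ : ∀ s, deriv Q s = 0 := by
    intro s; rw [hQfun]; simp
  -- τg = 0
  have hτg : ∀ s, τg s = 0 := by
    intro s
    have h := (hDarboux s).2.1
    rw [hderivQ s] at h
    rcases smul_eq_zero.mp h.symm with h1 | h1
    · exact h1
    · exfalso
      have := hnunit s
      rw [h1] at this
      simp [iprod] at this
  -- ⟨Q,d⟩ = ±1
  have hQd : ∀ s, iprod (Q s) d = 1 ∨ iprod (Q s) d = -1 := by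
    intro s
    rcases hd with h | h
    · left; rw [h s]; exact hQunit s
    · right
      have := hQunit s
      rw [h s]
      simp only [iprod, Prod.snd_neg, Prod.fst_neg] at this ⊢
      nlinarith [this]
  -- kg = 0 : differentiate ⟨T,d⟩ = 0
  have hkg : ∀ s, kg s = 0 := by
    intro s
    have hT : HasDerivAt T (deriv T s) s := (hTdiff s).hasDerivAt
    have h1 : HasDerivAt (fun t => (T t).2.1) ((deriv T s).2.1) s := hT.snd.fst
    have h2 : HasDerivAt (fun t => (T t).2.2) ((deriv T s).2.2) s := hT.snd.snd
    have hf : HasDerivAt (fun t => iprod (T t) d)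
        ((deriv T s).2.1 * d.2.1 + (deriv T s).2.2 * d.2.2) s :=
      (h1.mul_const d.2.1).add (h2.mul_const d.2.2)
    have hzero : (fun t => iprod (T t) d) = fun _ => (0 : ℝ) := funext hTd
    rw [hzero] at hf
    have hz : (deriv T s).2.1 * d.2.1 + (deriv T s).2.2 * d.2.2 = 0 :=
      (hasDerivAt_const s (0:ℝ)).unique hf |>.symm
    rw [(hDarboux s).1] at hz
    have hsil' := hsil s
    have hQd' := hQd s
    simp only [iprod, Prod.snd_add, Prod.fst_add, Prod.smul_snd, Prod.smul_fst,
      smul_eq_mul] at hz hsil' hQd'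
    rcases hQd' with h | h
    · linear_combination hz - kn s * hsil' - kg s * h
    · linear_combination -hz + kn s * hsil' + kg s * h
  -- conclude
  intro s
  refine ⟨hτg s, hkg s, ?_⟩
  have hkgfun : kg = fun _ => (0:ℝ) := funext hkg
  have hdkg : deriv kg s = 0 := by rw [hkgfun]; simp
  rw [hτ s, hτg s, hdkg, hkg s]
  simp
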